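/- Let P and Q be probability measures on ℝ^D with finite second moments, and let ψ*, φ* : ℝ^D → ℝ be differentiable convex functions such that ∇ψ*(∇φ*(y)) = y for all y and the pushforward of Q under ∇φ* equals P. Let ψ : ℝ^D → ℝ be a differentiable convex function whose gradient is Lipschitz with constant B > 0 and such that ∫ ‖∇ψ(x) − ∇ψ*(x)‖² dP(x) ≤ ε_X, and let φ : ℝ^D → ℝ be a differentiable convex function such that ∫ ‖∇φ(y) − ∇φ*(y)‖² dQ(y) ≤ ε_Y, for some ε_X, ε_Y ≥ 0. Then √(∫ ‖∇ψ(∇φ(y)) − y‖² dQ(y)) ≤ B·√ε_Y + √ε_X. -/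

import Mathlib

open MeasureTheory ENNReal
open scoped RealInnerProductSpace

/-- If `∇ψ` is `ε_X`-close to `∇ψ*` in `L²(P)` and `∇φ` is `ε_Y`-close to `∇φ*` in
`L²(Q)`, with `∇ψ` `B`-Lipschitz, then `√(∫ ‖∇ψ(∇φ(y)) - y‖² dQ) ≤ B√ε_Y + √ε_X`. -/
theorem cycle_defect_bound {D : ℕ}
    (P Q : Measure (EuclideanSpace ℝ (Fin D)))
    [IsProbabilityMeasure P] [IsProbabilityMeasure Q]
    (hP2 : Integrable (fun x => ‖x‖ ^ 2) P)
    (hQ2 : Integrable (fun y => ‖y‖ ^ 2) Q)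
    (ψs φs : EuclideanSpace ℝ (Fin D) → ℝ)
    (hψs : Differentiable ℝ ψs) (hψsc : ConvexOn ℝ Set.univ ψs)
    (hφs : Differentiable ℝ φs) (hφsc : ConvexOn ℝ Set.univ φs)
    (hinv : ∀ y, gradient ψs (gradient φs y) = y)
    (hQP : Q.map (gradient φs) = P)
    (ψ : EuclideanSpace ℝ (Fin D) → ℝ)
    (hψ : Differentiable ℝ ψ) (hψc : ConvexOn ℝ Set.univ ψ)
    (B : ℝ) (hB : 0 < B)
    (hBLip : ∀ x x', ‖gradient ψ x - gradient ψ x'‖ ≤ B * ‖x - x'‖)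
    (φ : EuclideanSpace ℝ (Fin D) → ℝ)
    (hφ : Differentiable ℝ φ) (hφc : ConvexOn ℝ Set.univ φ)
    (εX εY : ℝ) (hεX : 0 ≤ εX) (hεY : 0 ≤ εY)
    (hIX : Integrable (fun x => ‖gradient ψ x - gradient ψs x‖ ^ 2) P)
    (hX : (∫ x, ‖gradient ψ x - gradient ψs x‖ ^ 2 ∂P) ≤ εX)
    (hIY : Integrable (fun y => ‖gradient φ y - gradient φs y‖ ^ 2) Q)
    (hY : (∫ y, ‖gradient φ y - gradient φs y‖ ^ 2 ∂Q) ≤ εY)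
    (hIcycle : Integrable (fun y => ‖gradient ψ (gradient φ y) - y‖ ^ 2) Q) :
    Real.sqrt (∫ y, ‖gradient ψ (gradient φ y) - y‖ ^ 2 ∂Q) ≤
      B * Real.sqrt εY + Real.sqrt εX := by
  have mgrad : ∀ f : EuclideanSpace ℝ (Fin D) → ℝ, Measurable (gradient f) := fun f =>
    ((InnerProductSpace.toDual ℝ (EuclideanSpace ℝ (Fin D))).symm.continuous.measurable).comp
      (measurable_fderiv ℝ f)
  have cψ : Continuous (gradient ψ) := by
    have : LipschitzWith B.toNNReal (gradient ψ) := by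
      refine LipschitzWith.of_dist_le_mul fun x y => ?_
      simpa [dist_eq_norm, Real.coe_toNNReal B hB.le] using hBLip x y
    exact this.continuous
  have mφ := mgrad φ
  have mφs := mgrad φs
  have mψ := mgrad ψ
  have mψs := mgrad ψs
  -- key conversion : (‖u‖₊ : ℝ≥0∞) ^ (2:ℝ) = ofReal (‖u‖^2)
  have key : ∀ (u : EuclideanSpace ℝ (Fin D)),
      ((‖u‖₊ : ℝ≥0∞)) ^ (2:ℝ) = ENNReal.ofReal (‖u‖ ^ 2) := fun u => by
    rw [← enorm_eq_nnnorm, ← ofReal_norm,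
      ENNReal.ofReal_rpow_of_nonneg (norm_nonneg _) (by norm_num)]
    norm_num
  set g : EuclideanSpace ℝ (Fin D) → EuclideanSpace ℝ (Fin D) :=
    fun y => gradient ψ (gradient φ y) - gradient ψ (gradient φs y) with hg
  set h : EuclideanSpace ℝ (Fin D) → EuclideanSpace ℝ (Fin D) :=
    fun y => gradient ψ (gradient φs y) - y with hh
  have mg : Measurable g := (cψ.measurable.comp mφ).sub (cψ.measurable.comp mφs)
  have mh : Measurable h := (cψ.measurable.comp mφs).sub measurable_id
  set FY : EuclideanSpace ℝ (Fin D) → ℝ≥0∞ := fun y => (‖g y‖₊ : ℝ≥0∞) with hFY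
  set GY : EuclideanSpace ℝ (Fin D) → ℝ≥0∞ := fun y => (‖h y‖₊ : ℝ≥0∞) with hGY
  set I : ℝ≥0∞ := ∫⁻ y, ((‖gradient ψ (gradient φ y) - y‖₊ : ℝ≥0∞)) ^ (2:ℝ) ∂Q with hI
  have htri : I ≤ ∫⁻ y, (FY + GY) y ^ (2:ℝ) ∂Q := by
    refine lintegral_mono fun y => ?_
    refine ENNReal.rpow_le_rpow ?_ (by norm_num)
    have hd : gradient ψ (gradient φ y) - y = g y + h y := by
      simp only [hg, hh]; abel
    rw [hd, Pi.add_apply]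
    simp only [hFY, hGY]
    exact_mod_cast nnnorm_add_le (g y) (h y)
  have hmink := ENNReal.lintegral_Lp_add_le (μ := Q) mg.enorm.aemeasurable
      mh.enorm.aemeasurable (by norm_num : (1:ℝ) ≤ 2)
  -- first term
  have h1 : (∫⁻ y, FY y ^ (2:ℝ) ∂Q) ≤ ENNReal.ofReal (B ^ 2 * εY) := by
    have hb : ∀ y, FY y ^ (2:ℝ) ≤
        ENNReal.ofReal (B ^ 2) * ((‖gradient φ y - gradient φs y‖₊ : ℝ≥0∞)) ^ (2:ℝ) := by
      intro y
      have h1' : FY y ≤ ENNReal.ofReal B * (‖gradient φ y - gradient φs y‖₊ : ℝ≥0∞) := by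
        have hgy : ‖g y‖ ≤ B * ‖gradient φ y - gradient φs y‖ := by
          simpa [hg] using hBLip (gradient φ y) (gradient φs y)
        calc FY y = ENNReal.ofReal ‖g y‖ := (ofReal_norm _).symm
          _ ≤ ENNReal.ofReal (B * ‖gradient φ y - gradient φs y‖) :=
              ENNReal.ofReal_le_ofReal hgy
          _ = ENNReal.ofReal B * ENNReal.ofReal ‖gradient φ y - gradient φs y‖ :=
              ENNReal.ofReal_mul hB.le
          _ = ENNReal.ofReal B * (‖gradient φ y - gradient φs y‖₊ : ℝ≥0∞) := by
              rw [ofReal_norm, enorm_eq_nnnorm]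
      calc FY y ^ (2:ℝ) ≤ (ENNReal.ofReal B * (‖gradient φ y - gradient φs y‖₊ : ℝ≥0∞)) ^ (2:ℝ) :=
            ENNReal.rpow_le_rpow h1' (by norm_num)
        _ = ENNReal.ofReal (B ^ 2) * ((‖gradient φ y - gradient φs y‖₊ : ℝ≥0∞)) ^ (2:ℝ) := by
            rw [ENNReal.mul_rpow_of_nonneg _ _ (by norm_num : (0:ℝ) ≤ 2),
              ENNReal.ofReal_rpow_of_nonneg hB.le (by norm_num)]
            norm_num
    calc (∫⁻ y, FY y ^ (2:ℝ) ∂Q)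
        ≤ ∫⁻ y, ENNReal.ofReal (B ^ 2) * ((‖gradient φ y - gradient φs y‖₊ : ℝ≥0∞)) ^ (2:ℝ) ∂Q :=
          lintegral_mono hb
      _ = ENNReal.ofReal (B ^ 2) * ∫⁻ y, ((‖gradient φ y - gradient φs y‖₊ : ℝ≥0∞)) ^ (2:ℝ) ∂Q :=
          lintegral_const_mul' _ _ ENNReal.ofReal_ne_top
      _ = ENNReal.ofReal (B ^ 2) * ENNReal.ofReal (∫ y, ‖gradient φ y - gradient φs y‖ ^ 2 ∂Q) := by
          rw [ofReal_integral_eq_lintegral_ofReal hIY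
            (Filter.Eventually.of_forall fun y => sq_nonneg _)]
          simp only [key]
      _ ≤ ENNReal.ofReal (B ^ 2) * ENNReal.ofReal εY := by
          exact mul_le_mul_right (ENNReal.ofReal_le_ofReal hY) _
      _ = ENNReal.ofReal (B ^ 2 * εY) := (ENNReal.ofReal_mul (by positivity)).symm
  -- second term
  have h2 : (∫⁻ y, GY y ^ (2:ℝ) ∂Q) ≤ ENNReal.ofReal εX := by
    have heq : ∀ y, GY y ^ (2:ℝ) =
        (fun x => ((‖gradient ψ x - gradient ψs x‖₊ : ℝ≥0∞)) ^ (2:ℝ)) (gradient φs y) := by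
      intro y
      have : gradient ψ (gradient φs y) - y
          = gradient ψ (gradient φs y) - gradient ψs (gradient φs y) := by rw [hinv y]
      simp only [hGY, hh, this]
    have mH : Measurable fun x => ((‖gradient ψ x - gradient ψs x‖₊ : ℝ≥0∞)) ^ (2:ℝ) :=
      (ENNReal.continuous_rpow_const.measurable).comp (mψ.sub mψs).enorm
    calc (∫⁻ y, GY y ^ (2:ℝ) ∂Q)
        = ∫⁻ x, ((‖gradient ψ x - gradient ψs x‖₊ : ℝ≥0∞)) ^ (2:ℝ) ∂P := by
          rw [← hQP, lintegral_map mH mφs]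
          simp only [heq]
      _ = ENNReal.ofReal (∫ x, ‖gradient ψ x - gradient ψs x‖ ^ 2 ∂P) := by
          rw [ofReal_integral_eq_lintegral_ofReal hIX
            (Filter.Eventually.of_forall fun x => sq_nonneg _)]
          simp only [key]
      _ ≤ ENNReal.ofReal εX := ENNReal.ofReal_le_ofReal hX
  -- combine
  have hfin : I ^ (1/2:ℝ) ≤ ENNReal.ofReal (B * Real.sqrt εY + Real.sqrt εX) := by
    calc I ^ (1/2:ℝ) ≤ (∫⁻ y, (FY + GY) y ^ (2:ℝ) ∂Q) ^ (1/2:ℝ) :=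
          ENNReal.rpow_le_rpow htri (by norm_num)
      _ ≤ (∫⁻ y, FY y ^ (2:ℝ) ∂Q) ^ (1/2:ℝ) + (∫⁻ y, GY y ^ (2:ℝ) ∂Q) ^ (1/2:ℝ) := hmink
      _ ≤ ENNReal.ofReal (B ^ 2 * εY) ^ (1/2:ℝ) + ENNReal.ofReal εX ^ (1/2:ℝ) :=
          add_le_add (ENNReal.rpow_le_rpow h1 (by norm_num))
            (ENNReal.rpow_le_rpow h2 (by norm_num))
      _ = ENNReal.ofReal (B * Real.sqrt εY) + ENNReal.ofReal (Real.sqrt εX) := by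
          rw [ENNReal.ofReal_rpow_of_nonneg (by positivity) (by norm_num),
            ENNReal.ofReal_rpow_of_nonneg hεX (by norm_num)]
          congr 1
          · congr 1
            rw [← Real.sqrt_eq_rpow, Real.sqrt_mul (sq_nonneg B), Real.sqrt_sq hB.le]
          · rw [← Real.sqrt_eq_rpow]
      _ = ENNReal.ofReal (B * Real.sqrt εY + Real.sqrt εX) :=
          (ENNReal.ofReal_add (by positivity) (by positivity)).symm
  have hIR : ENNReal.ofReal (∫ y, ‖gradient ψ (gradient φ y) - y‖ ^ 2 ∂Q) = I := by
    rw [ofReal_integral_eq_lintegral_ofReal hIcycle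
      (Filter.Eventually.of_forall fun y => sq_nonneg _)]
    simp only [hI, key]
  have hnn : 0 ≤ ∫ y, ‖gradient ψ (gradient φ y) - y‖ ^ 2 ∂Q :=
    integral_nonneg fun y => sq_nonneg _
  have := ENNReal.toReal_mono (by exact ENNReal.ofReal_ne_top) hfin
  rw [ENNReal.toReal_ofReal (by positivity)] at this
  calc Real.sqrt (∫ y, ‖gradient ψ (gradient φ y) - y‖ ^ 2 ∂Q)
      = (I ^ (1/2:ℝ)).toReal := by
        rw [← ENNReal.toReal_rpow, ← hIR, ENNReal.toReal_ofReal hnn, Real.sqrt_eq_rpow]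
    _ ≤ B * Real.sqrt εY + Real.sqrt εX := this
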